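/- For every positive integer m, every real λ ∈ [0,1), and every positive real K, we have (K/m)^m + (K/(m+1))^{m+1} ≥ (K/(m+λ))^{m+λ}. -/

import Mathlib

theorem stmt5 (m : ℕ) (hm : 1 ≤ m) (lam K : ℝ) (hl0 : 0 ≤ lam) (hl1 : lam < 1)
    (hK : 0 < K) :
    (K / ((m : ℝ) + lam)) ^ ((m : ℝ) + lam)
      ≤ (K / (m : ℝ)) ^ (m : ℝ) + (K / ((m : ℝ) + 1)) ^ ((m : ℝ) + 1) := by
  set M : ℝ := (m : ℝ) with hMdef
  have hM : (1:ℝ) ≤ M := by rw [hMdef]; exact_mod_cast hm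
  have hM0 : (0:ℝ) < M := lt_of_lt_of_le one_pos hM
  have hMl : (0:ℝ) < M + lam := by linarith
  have hM1 : (0:ℝ) < M + 1 := by linarith
  set a : ℝ := K / (M + lam) with ha_def
  have ha : 0 < a := div_pos hK hMl
  have key : a ^ (M + lam) = (a ^ M) ^ (1 - lam) * (a ^ (M + 1)) ^ lam := by
    rw [← Real.rpow_mul ha.le, ← Real.rpow_mul ha.le, ← Real.rpow_add ha]
    ring_nf
  have amg : (a ^ M) ^ (1 - lam) * (a ^ (M + 1)) ^ lam
      ≤ (1 - lam) * a ^ M + lam * a ^ (M + 1) :=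
    Real.geom_mean_le_arith_mean2_weighted (by linarith) hl0
      (Real.rpow_nonneg ha.le _) (Real.rpow_nonneg ha.le _) (by ring)
  have h1 : (1 - lam) * a ^ M ≤ (K / M) ^ M := by
    have haK : a ≤ K / M := div_le_div_of_nonneg_left hK.le hM0 (by linarith)
    calc (1 - lam) * a ^ M ≤ 1 * a ^ M :=
          mul_le_mul_of_nonneg_right (by linarith) (Real.rpow_nonneg ha.le _)
      _ = a ^ M := one_mul _
      _ ≤ (K / M) ^ M := Real.rpow_le_rpow ha.le haK hM0.le
  have hcast : ((m + 1 : ℕ) : ℝ) = M + 1 := by push_cast [hMdef]; ring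
  have h2 : lam * a ^ (M + 1) ≤ (K / (M + 1)) ^ (M + 1) := by
    have hber : lam ≤ ((M + lam) / (M + 1)) ^ (M + 1) := by
      have hx : (-2:ℝ) ≤ (lam - 1) / (M + 1) := by
        have h' : (-1:ℝ) ≤ (lam - 1) / (M + 1) := by
          rw [le_div_iff₀ hM1]; nlinarith
        linarith
      have hb := one_add_mul_le_pow hx (m + 1)
      have e1 : 1 + ((m + 1 : ℕ) : ℝ) * ((lam - 1) / (M + 1)) = lam := by
        rw [hcast]; field_simp; ring
      have e2 : (1:ℝ) + (lam - 1) / (M + 1) = (M + lam) / (M + 1) := by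
        field_simp; ring
      have e3 : ((M + lam) / (M + 1)) ^ (M + 1)
          = ((M + lam) / (M + 1)) ^ (m + 1 : ℕ) := by
        rw [← hcast, Real.rpow_natCast]
      rw [e3]
      calc lam = 1 + ((m + 1 : ℕ) : ℝ) * ((lam - 1) / (M + 1)) := e1.symm
        _ ≤ (1 + (lam - 1) / (M + 1)) ^ (m + 1 : ℕ) := hb
        _ = ((M + lam) / (M + 1)) ^ (m + 1 : ℕ) := by rw [e2]
    have hpos : (0:ℝ) < (M + lam) / (M + 1) := div_pos hMl hM1
    calc lam * a ^ (M + 1)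
        ≤ ((M + lam) / (M + 1)) ^ (M + 1) * a ^ (M + 1) :=
          mul_le_mul_of_nonneg_right hber (Real.rpow_nonneg ha.le _)
      _ = ((M + lam) / (M + 1) * a) ^ (M + 1) :=
          (Real.mul_rpow hpos.le ha.le).symm
      _ = (K / (M + 1)) ^ (M + 1) := by
          rw [show (M + lam) / (M + 1) * a = K / (M + 1) by
            rw [ha_def]; field_simp]
  calc (K / (M + lam)) ^ (M + lam) = a ^ (M + lam) := rfl
    _ = (a ^ M) ^ (1 - lam) * (a ^ (M + 1)) ^ lam := key
    _ ≤ (1 - lam) * a ^ M + lam * a ^ (M + 1) := amg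
    _ ≤ (K / M) ^ M + (K / (M + 1)) ^ (M + 1) := add_le_add h1 h2
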